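/- Levelset equation for classical solutions (identity (4.2)): Let m > 0, c ∈ ℝ, α : ℝ → ℝ, ε > 0. Let X : ℝ → ℝ be twice differentiable at y₀, let p : ℝ² → ℝ be twice continuously differentiable in a neighborhood of (X(y₀), y₀), assume p(X(y), y) = ε for all y near y₀, and assume p satisfies the stationary equation −m·p·Δp + (c + α(y₀))·∂_x p = |∇p|² at the point (X(y₀), y₀). Then, writing D := ∂_x p(X(y₀),y₀) and evaluating all partial derivatives of p at (X(y₀), y₀), the following identity holds: m·ε·D·X''(y₀) − m·ε·[ ∂²_{xx} p·(1 − (X'(y₀))²) − 2·∂²_{xy} p·X'(y₀) ] + (c + α(y₀))·D = D²·(1 + (X'(y₀))²). -/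

import Mathlib

open Filter Topology

private lemma comp_curve_hasDerivAt {E : Type*} [NormedAddCommGroup E] [NormedSpace ℝ E]
    {l : E → ℝ} {l' : E →L[ℝ] ℝ} {f : ℝ → E} {f' : E} {x : ℝ}
    (hf : HasDerivAt f f' x) (hl : HasFDerivAt l l' (f x)) :
    HasDerivAt (fun s => l (f s)) (l' f') x :=
  hl.comp_hasDerivAt x hf

private lemma comp_curve_hasDerivAt' {E F : Type*} [NormedAddCommGroup E] [NormedSpace ℝ E]
    [NormedAddCommGroup F] [NormedSpace ℝ F]
    {l : E → F} {l' : E →L[ℝ] F} {f : ℝ → E} {f' : E} {x : ℝ}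
    (hf : HasDerivAt f f' x) (hl : HasFDerivAt l l' (f x)) :
    HasDerivAt (fun s => l (f s)) (l' f') x :=
  hl.comp_hasDerivAt x hf

/-- Levelset equation for classical solutions (identity (4.2)): if
`p(X(y), y) = ε > 0` near `y₀`, `X` is twice differentiable at `y₀`, `p` is `C²`
near `(X(y₀), y₀)` and satisfies `−m·p·Δp + (c + α(y₀))·∂ₓp = |∇p|²` at
`(X(y₀), y₀)`, then, with `D := ∂ₓp(X(y₀), y₀)`,
`m·ε·D·X'' − m·ε·[∂²ₓₓp·(1 − X'²) − 2·∂²ₓᵧp·X'] + (c + α(y₀))·D = D²·(1 + X'²)`. -/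
theorem levelset_equation (m c ε : ℝ) (hm : 0 < m) (hε : 0 < ε) (α : ℝ → ℝ)
    (X : ℝ → ℝ) (y₀ : ℝ) (p : ℝ × ℝ → ℝ)
    (hX : ∀ᶠ y in nhds y₀, DifferentiableAt ℝ X y)
    (hX2 : DifferentiableAt ℝ (deriv X) y₀)
    (hp : ContDiffAt ℝ 2 p (X y₀, y₀))
    (hlev : ∀ᶠ y in nhds y₀, p (X y, y) = ε)
    (heq : -(m * p (X y₀, y₀)) *
          (deriv (fun s => deriv (fun r => p (r, y₀)) s) (X y₀)
            + deriv (fun s => deriv (fun r => p (X y₀, r)) s) y₀)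
        + (c + α y₀) * deriv (fun s => p (s, y₀)) (X y₀)
      = (deriv (fun s => p (s, y₀)) (X y₀)) ^ 2
        + (deriv (fun s => p (X y₀, s)) y₀) ^ 2) :
    m * ε * deriv (fun s => p (s, y₀)) (X y₀) * deriv (deriv X) y₀
      - m * ε * (deriv (fun s => deriv (fun r => p (r, y₀)) s) (X y₀)
            * (1 - (deriv X y₀) ^ 2)
          - 2 * deriv (fun s => deriv (fun r => p (s, r)) y₀) (X y₀)
            * deriv X y₀)
      + (c + α y₀) * deriv (fun s => p (s, y₀)) (X y₀)
    = (deriv (fun s => p (s, y₀)) (X y₀)) ^ 2 * (1 + (deriv X y₀) ^ 2) := by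
  have hpe : ∀ᶠ z in 𝓝 ((X y₀, y₀) : ℝ × ℝ), ContDiffAt ℝ 2 p z :=
    hp.eventually (by simp)
  have hdiff : ∀ᶠ z in 𝓝 ((X y₀, y₀) : ℝ × ℝ), DifferentiableAt ℝ p z :=
    hpe.mono fun z hz => hz.differentiableAt two_ne_zero
  have hX0 : DifferentiableAt ℝ X y₀ := hX.self_of_nhds
  have hfd1 : DifferentiableAt ℝ (fderiv ℝ p) (X y₀, y₀) :=
    (hp.fderiv_right (m := 1) (by norm_num)).differentiableAt one_ne_zero
  set L := fderiv ℝ p (X y₀, y₀) with hL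
  set H := fderiv ℝ (fderiv ℝ p) (X y₀, y₀) with hH
  have curveX : ∀ a b : ℝ, HasDerivAt (fun s => ((s, b) : ℝ × ℝ)) (1, 0) a :=
    fun a b => (hasDerivAt_id a).prodMk (hasDerivAt_const a b)
  have curveY : ∀ a b : ℝ, HasDerivAt (fun s => ((a, s) : ℝ × ℝ)) (0, 1) b :=
    fun a b => (hasDerivAt_const b a).prodMk (hasDerivAt_id b)
  have hd0 : DifferentiableAt ℝ p (X y₀, y₀) := hdiff.self_of_nhds
  -- first-order partials
  have hA : deriv (fun s => p (s, y₀)) (X y₀) = L (1, 0) :=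
    (comp_curve_hasDerivAt (curveX (X y₀) y₀) hd0.hasFDerivAt).deriv
  have hB : deriv (fun s => p (X y₀, s)) y₀ = L (0, 1) :=
    (comp_curve_hasDerivAt (curveY (X y₀) y₀) hd0.hasFDerivAt).deriv
  -- neighbourhood differentiability along the axes
  have hnbx : ∀ᶠ s in 𝓝 (X y₀), DifferentiableAt ℝ p (s, y₀) := by
    have hc : ContinuousAt (fun s => ((s, y₀) : ℝ × ℝ)) (X y₀) :=
      (continuous_id.prodMk continuous_const).continuousAt
    exact hc.eventually hdiff
  have hnby : ∀ᶠ s in 𝓝 y₀, DifferentiableAt ℝ p (X y₀, s) := by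
    have hc : ContinuousAt (fun s => ((X y₀, s) : ℝ × ℝ)) y₀ :=
      (continuous_const.prodMk continuous_id).continuousAt
    exact hc.eventually hdiff
  -- second-order partials
  have hcx : HasDerivAt (fun s => fderiv ℝ p (s, y₀)) (H (1, 0)) (X y₀) :=
    comp_curve_hasDerivAt' (curveX (X y₀) y₀) hfd1.hasFDerivAt
  have hcy : HasDerivAt (fun s => fderiv ℝ p (X y₀, s)) (H (0, 1)) y₀ :=
    comp_curve_hasDerivAt' (curveY (X y₀) y₀) hfd1.hasFDerivAt
  have hxx : deriv (fun s => deriv (fun r => p (r, y₀)) s) (X y₀) = H (1, 0) (1, 0) := by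
    have e : (fun s => deriv (fun r => p (r, y₀)) s)
        =ᶠ[𝓝 (X y₀)] fun s => fderiv ℝ p (s, y₀) (1, 0) := by
      filter_upwards [hnbx] with s hs
      exact (comp_curve_hasDerivAt (curveX s y₀) hs.hasFDerivAt).deriv
    rw [e.deriv_eq]
    have := (hcx.clm_apply (hasDerivAt_const (X y₀) ((1:ℝ), (0:ℝ)))).deriv
    simpa using this
  have hxy : deriv (fun s => deriv (fun r => p (s, r)) y₀) (X y₀) = H (1, 0) (0, 1) := by
    have e : (fun s => deriv (fun r => p (s, r)) y₀)
        =ᶠ[𝓝 (X y₀)] fun s => fderiv ℝ p (s, y₀) (0, 1) := by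
      filter_upwards [hnbx] with s hs
      exact (comp_curve_hasDerivAt (curveY s y₀) hs.hasFDerivAt).deriv
    rw [e.deriv_eq]
    have := (hcx.clm_apply (hasDerivAt_const (X y₀) ((0:ℝ), (1:ℝ)))).deriv
    simpa using this
  have hyy : deriv (fun s => deriv (fun r => p (X y₀, r)) s) y₀ = H (0, 1) (0, 1) := by
    have e : (fun s => deriv (fun r => p (X y₀, r)) s)
        =ᶠ[𝓝 y₀] fun s => fderiv ℝ p (X y₀, s) (0, 1) := by
      filter_upwards [hnby] with s hs
      exact (comp_curve_hasDerivAt (curveY (X y₀) s) hs.hasFDerivAt).deriv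
    rw [e.deriv_eq]
    have := (hcy.clm_apply (hasDerivAt_const y₀ ((0:ℝ), (1:ℝ)))).deriv
    simpa using this
  -- the level set function
  have hXev : ∀ᶠ y in 𝓝 y₀, DifferentiableAt ℝ p (X y, y) := by
    have hc : ContinuousAt (fun y => ((X y, y) : ℝ × ℝ)) y₀ :=
      hX0.continuousAt.prodMk continuousAt_id
    exact hc.eventually hdiff
  have hg0 : (fun y => fderiv ℝ p (X y, y) (deriv X y, 1)) =ᶠ[𝓝 y₀] fun _ => (0 : ℝ) := by
    filter_upwards [hX, hXev, hlev.eventually_nhds] with y hXy hpy hly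
    have hf : HasDerivAt (fun y' => p (X y', y')) (fderiv ℝ p (X y, y) (deriv X y, 1)) y :=
      comp_curve_hasDerivAt (hXy.hasDerivAt.prodMk (hasDerivAt_id y)) hpy.hasFDerivAt
    have h1 : deriv (fun y' => p (X y', y')) y = deriv (fun _ => (ε : ℝ)) y :=
      Filter.EventuallyEq.deriv_eq hly
    rw [hf.deriv] at h1
    simpa using h1
  have hB0 : L (1, 0) * deriv X y₀ + L (0, 1) = 0 := by
    have h0 : L (deriv X y₀, 1) = 0 := hg0.self_of_nhds
    have hv : ((deriv X y₀, 1) : ℝ × ℝ)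
        = deriv X y₀ • ((1:ℝ), (0:ℝ)) + ((0:ℝ), (1:ℝ)) := by
      simp [Prod.ext_iff]
    rw [hv, map_add, map_smul, smul_eq_mul] at h0
    linarith
  have hsecond : HasDerivAt (fun y => fderiv ℝ p (X y, y) (deriv X y, 1))
      (H (deriv X y₀, 1) (deriv X y₀, 1) + L (deriv (deriv X) y₀, 0)) y₀ := by
    have hc : HasDerivAt (fun y => fderiv ℝ p (X y, y)) (H (deriv X y₀, 1)) y₀ :=
      comp_curve_hasDerivAt' (hX0.hasDerivAt.prodMk (hasDerivAt_id y₀)) hfd1.hasFDerivAt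
    have hu : HasDerivAt (fun y => ((deriv X y, 1) : ℝ × ℝ)) (deriv (deriv X) y₀, 0) y₀ :=
      hX2.hasDerivAt.prodMk (hasDerivAt_const y₀ 1)
    exact hc.clm_apply hu
  have hzero : H (deriv X y₀, 1) (deriv X y₀, 1) + L (deriv (deriv X) y₀, 0) = 0 := by
    have h1 : deriv (fun y => fderiv ℝ p (X y, y) (deriv X y, 1)) y₀ = 0 := by
      rw [hg0.deriv_eq]; simp
    rw [hsecond.deriv] at h1
    exact h1
  have hsym : H (1, 0) (0, 1) = H (0, 1) (1, 0) :=
    (hp.isSymmSndFDerivAt (by simp [minSmoothness_of_isRCLikeNormedField])) _ _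
  have hexp : H (deriv X y₀, 1) (deriv X y₀, 1)
      = deriv X y₀ * deriv X y₀ * H (1, 0) (1, 0)
        + deriv X y₀ * H (1, 0) (0, 1) + deriv X y₀ * H (0, 1) (1, 0)
        + H (0, 1) (0, 1) := by
    have hv : ((deriv X y₀, 1) : ℝ × ℝ)
        = deriv X y₀ • ((1:ℝ), (0:ℝ)) + ((0:ℝ), (1:ℝ)) := by
      simp [Prod.ext_iff]
    have h1 : H (deriv X y₀, 1) = deriv X y₀ • H (1, 0) + H (0, 1) := by
      rw [hv, map_add, map_smul]
    rw [h1, hv]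
    simp only [ContinuousLinearMap.add_apply, ContinuousLinearMap.smul_apply,
      map_add, map_smul, smul_eq_mul]
    ring
  have hlin : L (deriv (deriv X) y₀, 0) = deriv (deriv X) y₀ * L (1, 0) := by
    have hv : ((deriv (deriv X) y₀, 0) : ℝ × ℝ)
        = deriv (deriv X) y₀ • ((1:ℝ), (0:ℝ)) := by simp [Prod.ext_iff]
    rw [hv, map_smul, smul_eq_mul]
  have hpε : p (X y₀, y₀) = ε := hlev.self_of_nhds
  rw [hexp, hsym, hlin] at hzero
  rw [hpε, hA, hB, hxx, hyy] at heq
  rw [hA, hxx, hxy]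
  linear_combination heq + m * ε * hzero + (L (0, 1) - L (1, 0) * deriv X y₀) * hB0 + 2 * m * ε * deriv X y₀ * hsym
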